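/- If D and D' are almost inner derivations of a Lie algebra g (i.e., D(x) ∈ [g,x] for all x ∈ g), then their commutator [D,D'] = DD' - D'D is also an almost inner derivation of g. -/
import Mathlib


/-- If `D` and `D'` are almost inner derivations of a Lie algebra `g`
(i.e. `D x ∈ ⁅g, x⁆` for all `x`), then `⁅D, D'⁆ = D ∘ D' - D' ∘ D` is
also an almost inner derivation. -/
theorem stmt0 {K L : Type*} [Field K] [LieRing L] [LieAlgebra K L]
    (D D' : LieDerivation K L L)
    (hD : ∀ x : L, ∃ y : L, D x = ⁅y, x⁆)
    (hD' : ∀ x : L, ∃ y : L, D' x = ⁅y, x⁆) :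
    ∀ x : L, ∃ y : L, (⁅D, D'⁆ : LieDerivation K L L) x = ⁅y, x⁆ := by
  intro x
  obtain ⟨y, hy⟩ := hD x
  obtain ⟨y', hy'⟩ := hD' x
  refine ⟨D y' - D' y + ⁅y', y⁆, ?_⟩
  have h1 : (⁅D, D'⁆ : LieDerivation K L L) x = D (D' x) - D' (D x) := by
    simp [LieDerivation.commutator_apply]
  rw [h1, hy, hy', D.apply_lie_eq_add, D'.apply_lie_eq_add, hy, hy']
  rw [add_lie, sub_lie, lie_lie]
  abel
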